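/- Suppose for each d the elliptical generator satisfies the second-order expansion c_d g_d(t) = λ₁ t^{-(d+γ^{-1})/2} [1 + λ₂ t^{ρ/(2γ)} + o(t^{ρ/(2γ)})] as t → ∞, with λ₁ > 0, λ₂ ∈ ℝ, γ > 0, ρ < 0. Then the conditional quantile function admits the second-order expansion Φ_{R*}^{-1}(1 - 1/t) = c₁ t^{γ/(γN+1)} [1 + c₂ t^{-min(-ρ, 2γ)/(γN+1)} + o(t^{-min(-ρ,2γ)/(γN+1)})] as t → ∞, for some constants c₁ > 0, c₂ ∈ ℝ. -/

import Mathlib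

open MeasureTheory Filter Real

lemma phi_tendsto (m : ℝ) :
    Tendsto (fun x : ℝ => if x = 1 then m else (x ^ m - 1) / (x - 1)) (nhds 1) (nhds m) := by
  have hd : HasDerivAt (fun x : ℝ => x ^ m) (m * (1 : ℝ) ^ (m - 1)) 1 :=
    Real.hasDerivAt_rpow_const (Or.inl one_ne_zero)
  rw [hasDerivAt_iff_tendsto_slope] at hd
  rw [Real.one_rpow, mul_one] at hd
  rw [← nhdsNE_sup_pure (1 : ℝ), tendsto_sup]
  constructor
  · refine hd.congr' ?_
    filter_upwards [self_mem_nhdsWithin] with x hx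
    have hx1 : x ≠ 1 := hx
    simp [slope, hx1, Real.one_rpow, div_eq_inv_mul]
  · rw [tendsto_pure_left]
    intro s hs
    simpa using mem_of_mem_nhds hs

lemma tendsto_rpow_one_mul {f g : ℝ → ℝ} {c : ℝ} (m : ℝ)
    (hf : Tendsto f atTop (nhds 1))
    (hfg : Tendsto (fun t => (f t - 1) * g t) atTop (nhds c)) :
    Tendsto (fun t => (f t ^ m - 1) * g t) atTop (nhds (m * c)) := by
  have h1 : Tendsto (fun t => (if f t = 1 then m else (f t ^ m - 1) / (f t - 1)))
      atTop (nhds m) := (phi_tendsto m).comp hf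
  have h2 := h1.mul hfg
  refine h2.congr fun t => ?_
  by_cases h : f t = 1
  · simp [h, Real.one_rpow]
  · have : f t - 1 ≠ 0 := sub_ne_zero.2 h
    rw [if_neg h, div_mul_eq_mul_div, div_eq_iff this]
    ring

lemma tail_bound {f : ℝ → ℝ} (hf : Measurable f) {p L : ℝ} (hp : 1 < p)
    {ε x : ℝ} (hε : 0 < ε) (hx : 1 ≤ x)
    (hb : ∀ u, x ≤ u → |f u * u ^ p - L| ≤ ε) :
    IntegrableOn f (Set.Ioi x) ∧
      |(∫ u in Set.Ioi x, f u) - L * (x ^ (1 - p) / (p - 1))| ≤ ε * (x ^ (1 - p) / (p - 1)) := by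
  have hx0 : (0:ℝ) < x := lt_of_lt_of_le one_pos hx
  have hpow : IntegrableOn (fun u : ℝ => u ^ (-p)) (Set.Ioi x) :=
    integrableOn_Ioi_rpow_of_lt (by linarith) hx0
  have hptw : ∀ u ∈ Set.Ioi x, |f u - L * u ^ (-p)| ≤ ε * u ^ (-p) := by
    intro u hu
    have hu0 : (0:ℝ) < u := lt_trans hx0 hu
    have hupos : (0:ℝ) < u ^ p := Real.rpow_pos_of_pos hu0 p
    have hid : f u - L * u ^ (-p) = (f u * u ^ p - L) * u ^ (-p) := by
      rw [Real.rpow_neg hu0.le]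
      field_simp
    rw [hid, abs_mul, abs_of_pos (Real.rpow_pos_of_pos hu0 (-p))]
    exact mul_le_mul_of_nonneg_right (hb u hu.le) (Real.rpow_pos_of_pos hu0 (-p)).le
  have hint : IntegrableOn f (Set.Ioi x) := by
    refine (hpow.const_mul (|L| + ε)).mono' hf.aestronglyMeasurable ?_
    rw [ae_restrict_iff' measurableSet_Ioi]
    refine MeasureTheory.ae_of_all _ fun u hu => ?_
    have hu0 : (0:ℝ) < u := lt_trans hx0 hu
    have h1 := hptw u hu
    have h3 := abs_sub_abs_le_abs_sub (f u) (L * u ^ (-p))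
    have habs : |L * u ^ (-p)| = |L| * u ^ (-p) := by
      rw [abs_mul, abs_of_pos (Real.rpow_pos_of_pos hu0 (-p))]
    rw [Real.norm_eq_abs]
    nlinarith [Real.rpow_pos_of_pos hu0 (-p)]
  have hIpow : ∫ u in Set.Ioi x, u ^ (-p) = x ^ (1 - p) / (p - 1) := by
    rw [integral_Ioi_rpow_of_lt (by linarith) hx0, show -p + 1 = 1 - p by ring,
      neg_div, ← div_neg, neg_sub]
  have hsubint : IntegrableOn (fun u => f u - L * u ^ (-p)) (Set.Ioi x) :=
    hint.sub (hpow.const_mul L)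
  have habs2 : |∫ u in Set.Ioi x, (f u - L * u ^ (-p))| ≤ ε * (x ^ (1 - p) / (p - 1)) := by
    have h4 : |∫ u in Set.Ioi x, (f u - L * u ^ (-p))|
        ≤ ∫ u in Set.Ioi x, |f u - L * u ^ (-p)| := by
      simpa [Real.norm_eq_abs] using
        MeasureTheory.norm_integral_le_integral_norm (μ := volume.restrict (Set.Ioi x))
          (fun u => f u - L * u ^ (-p))
    refine h4.trans ?_
    have h5 : ∫ u in Set.Ioi x, |f u - L * u ^ (-p)| ≤ ∫ u in Set.Ioi x, ε * u ^ (-p) :=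
      setIntegral_mono_on hsubint.abs (hpow.const_mul ε) measurableSet_Ioi hptw
    refine h5.trans_eq ?_
    rw [MeasureTheory.integral_const_mul, hIpow]
  have hEq : (∫ u in Set.Ioi x, f u) - L * (x ^ (1 - p) / (p - 1))
      = ∫ u in Set.Ioi x, (f u - L * u ^ (-p)) := by
    rw [MeasureTheory.integral_sub hint (hpow.const_mul L),
      MeasureTheory.integral_const_mul, hIpow]
  exact ⟨hint, by rw [hEq]; exact habs2⟩

lemma tail_tendsto {f : ℝ → ℝ} (hf : Measurable f) {p L : ℝ} (hp : 1 < p)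
    (h : Tendsto (fun u => f u * u ^ p) atTop (nhds L)) :
    (∀ᶠ x in atTop, IntegrableOn f (Set.Ioi x)) ∧
      Tendsto (fun x => (∫ u in Set.Ioi x, f u) * x ^ (p - 1)) atTop
        (nhds (L / (p - 1))) := by
  constructor
  · obtain ⟨u₀, hu₀⟩ := (Metric.tendsto_atTop.1 h) 1 one_pos
    filter_upwards [eventually_ge_atTop (max u₀ 1)] with x hx
    have hx1 : 1 ≤ x := le_trans (le_max_right _ _) hx
    refine (tail_bound (L := L) hf hp one_pos hx1 fun u hu => ?_).1
    have := hu₀ u (le_trans (le_trans (le_max_left _ _) hx) hu)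
    rw [Real.dist_eq] at this; linarith
  · rw [Metric.tendsto_atTop]
    intro ε hε
    have hp1 : (0:ℝ) < p - 1 := by linarith
    set ε' := ε * (p - 1) / 2 with hε'def
    have hε' : 0 < ε' := by positivity
    obtain ⟨u₀, hu₀⟩ := (Metric.tendsto_atTop.1 h) ε' hε'
    refine ⟨max u₀ 1, fun x hx => ?_⟩
    have hx1 : 1 ≤ x := le_trans (le_max_right _ _) hx
    have hx0 : 0 < x := lt_of_lt_of_le one_pos hx1
    obtain ⟨hint, hb⟩ := tail_bound hf hp hε' hx1 (fun u hu => by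
      have := hu₀ u (le_trans (le_trans (le_max_left _ _) hx) hu)
      rw [Real.dist_eq] at this; linarith)
    rw [Real.dist_eq]
    have hxpow : x ^ (1 - p) * x ^ (p - 1) = 1 := by
      rw [← Real.rpow_add hx0]; norm_num
    have key : (∫ u in Set.Ioi x, f u) * x ^ (p - 1) - L / (p - 1)
        = ((∫ u in Set.Ioi x, f u) - L * (x ^ (1 - p) / (p - 1))) * x ^ (p - 1) := by
      have h7 : L * (x ^ (1 - p) / (p - 1)) * x ^ (p - 1) = L / (p - 1) := by
        field_simp
        linear_combination L * hxpow
      rw [sub_mul, h7]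
    rw [key, abs_mul, abs_of_pos (Real.rpow_pos_of_pos hx0 _)]
    have h6 : ε' * (x ^ (1 - p) / (p - 1)) * x ^ (p - 1) = ε' / (p - 1) := by
      rw [mul_assoc ε' (x ^ (1 - p) / (p - 1)), div_mul_eq_mul_div (x ^ (1 - p)) (p - 1) (x ^ (p - 1)), hxpow, mul_one_div]
    calc |(∫ u in Set.Ioi x, f u) - L * (x ^ (1 - p) / (p - 1))| * x ^ (p - 1)
        ≤ ε' * (x ^ (1 - p) / (p - 1)) * x ^ (p - 1) :=
          mul_le_mul_of_nonneg_right hb (Real.rpow_pos_of_pos hx0 _).le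
      _ = ε' / (p - 1) := h6
      _ < ε := by rw [hε'def]; rw [div_lt_iff₀ hp1]; nlinarith

set_option maxHeartbeats 1000000 in
/-- If the generator satisfies the second-order expansion
`c_{N+1} g_{N+1}(t) = λ₁ t^{-(N+1+γ⁻¹)/2}[1 + λ₂ t^{ρ/(2γ)} + o(t^{ρ/(2γ)})]`, then the
conditional quantile function `Q(t) = Φ_{R*}⁻¹(1-1/t)` admits the second-order expansion
`Q(t) = c₁ t^{γ/(γN+1)}[1 + c₂ t^{-min(-ρ,2γ)/(γN+1)} + o(t^{-min(-ρ,2γ)/(γN+1)})]`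
for some `c₁ > 0`, `c₂ ∈ ℝ`. -/
theorem conditional_quantile_second_order
    (N : ℕ) (hN : 1 ≤ N) (γ ρ M C : ℝ)
    (hγ : 0 < γ) (hρ : ρ < 0) (hM : 0 < M) (hC : 0 < C)
    (lam1 lam2 : ℝ) (hlam1 : 0 < lam1)
    (G : ℝ → ℝ) (hmG : Measurable G) (hG0 : ∀ t, 0 ≤ G t)
    (hG : Tendsto (fun t : ℝ =>
        (G t / (lam1 * t ^ (-(((N : ℝ) + 1 + 1 / γ) / 2))) - 1) / t ^ (ρ / (2 * γ)))
      atTop (nhds lam2))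
    (Q : ℝ → ℝ) (hQtop : Tendsto Q atTop atTop)
    (hQ : ∀ᶠ t in atTop, (∫ u in Set.Ioi (Q t), G (M + u ^ 2)) / C = 1 / t) :
    ∃ c₁ : ℝ, 0 < c₁ ∧ ∃ c₂ : ℝ,
      Tendsto (fun t : ℝ =>
          (Q t / (c₁ * t ^ (γ / (γ * (N : ℝ) + 1))) - 1) *
            t ^ (min (-ρ) (2 * γ) / (γ * (N : ℝ) + 1)))
        atTop (nhds c₂) := by
  set α : ℝ := ((N : ℝ) + 1 + 1 / γ) / 2 with hαdef
  set δ : ℝ := min (-ρ / γ) 2 with hδdef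
  have hN1 : (1 : ℝ) ≤ (N : ℝ) := by exact_mod_cast hN
  have hγi : 0 < 1 / γ := by positivity
  have hα1 : 1 < 2 * α := by rw [hαdef]; linarith
  have hργ : 0 < -ρ / γ := div_pos (neg_pos.2 hρ) hγ
  have hδ0 : 0 < δ := lt_min hργ two_pos
  have hδ2 : δ ≤ 2 := min_le_right _ _
  -- limits of basic ingredients
  have hs : Tendsto (fun u : ℝ => M + u ^ 2) atTop atTop :=
    tendsto_atTop_add_const_left _ M (tendsto_pow_atTop (by norm_num))
  have hE : Tendsto (fun u : ℝ =>
      (G (M + u ^ 2) / (lam1 * (M + u ^ 2) ^ (-α)) - 1) / (M + u ^ 2) ^ (ρ / (2 * γ)))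
      atTop (nhds lam2) := hG.comp hs
  have hMu : Tendsto (fun u : ℝ => 1 + M / u ^ 2) atTop (nhds 1) := by
    have h0 : Tendsto (fun u : ℝ => M / u ^ 2) atTop (nhds 0) :=
      Tendsto.div_atTop tendsto_const_nhds (tendsto_pow_atTop (by norm_num))
    simpa using tendsto_const_nhds.add h0
  have hP : Tendsto (fun u : ℝ => (1 + M / u ^ 2) ^ (-α)) atTop (nhds 1) := by
    simpa using hMu.rpow_const (Or.inl one_ne_zero)
  -- L1, L2 limits
  set L1 : ℝ := if 2 ≤ -ρ / γ then M else 0 with hL1def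
  set L2 : ℝ := if -ρ / γ ≤ 2 then 1 else 0 with hL2def
  have hterm1 : Tendsto (fun u : ℝ => ((1 + M / u ^ 2) ^ (-α) - 1) * u ^ δ)
      atTop (nhds (-α * L1)) := by
    refine tendsto_rpow_one_mul (-α) hMu ?_
    have hev : (fun u : ℝ => (1 + M / u ^ 2 - 1) * u ^ δ) =ᶠ[atTop]
        (fun u : ℝ => M * u ^ (δ - 2)) := by
      filter_upwards [eventually_gt_atTop (0 : ℝ)] with u hu
      rw [Real.rpow_sub hu, ← Real.rpow_natCast u 2]
      push_cast
      field_simp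
      ring
    have hlim : Tendsto (fun u : ℝ => M * u ^ (δ - 2)) atTop (nhds L1) := by
      rw [hL1def]
      split_ifs with hcase
      · have hδ2' : δ = 2 := by rw [hδdef]; exact min_eq_right hcase
        simp [hδ2']
      · push_neg at hcase
        have hδlt : δ < 2 := by
          rw [hδdef]; exact lt_of_le_of_lt (min_le_left _ _) hcase
        have : Tendsto (fun u : ℝ => u ^ (δ - 2)) atTop (nhds 0) := by
          simpa using tendsto_rpow_neg_atTop (by linarith : 0 < -(δ - 2))
        simpa using this.const_mul M
    exact hlim.congr' hev.symm
  have hpow2 : Tendsto (fun u : ℝ => (M + u ^ 2) ^ (ρ / (2 * γ)) * u ^ δ)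
      atTop (nhds L2) := by
    have hev : (fun u : ℝ => (M + u ^ 2) ^ (ρ / (2 * γ)) * u ^ δ) =ᶠ[atTop]
        (fun u : ℝ => (1 + M / u ^ 2) ^ (ρ / (2 * γ)) * u ^ (ρ / γ + δ)) := by
      filter_upwards [eventually_gt_atTop (0 : ℝ)] with u hu
      have hu2 : (0:ℝ) < u ^ 2 := by positivity
      have h1 : M + u ^ 2 = u ^ 2 * (1 + M / u ^ 2) := by field_simp; ring
      have h1' : (0:ℝ) ≤ 1 + M / u ^ 2 := by positivity
      rw [h1, Real.mul_rpow hu2.le h1', ← Real.rpow_natCast u 2,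
        ← Real.rpow_mul hu.le, Real.rpow_add hu]
      push_cast
      rw [show (2:ℝ) * (ρ / (2 * γ)) = ρ / γ by field_simp]
      ring
    have hfac : Tendsto (fun u : ℝ => (1 + M / u ^ 2) ^ (ρ / (2 * γ))) atTop (nhds 1) := by
      simpa using hMu.rpow_const (Or.inl one_ne_zero)
    have hlim : Tendsto (fun u : ℝ => u ^ (ρ / γ + δ)) atTop (nhds L2) := by
      rw [hL2def]
      split_ifs with hcase
      · have hδeq : δ = -ρ / γ := by rw [hδdef]; exact min_eq_left hcase
        have : ρ / γ + δ = 0 := by rw [hδeq]; ring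
        simp [this]
      · push_neg at hcase
        have hδ2' : δ = 2 := by
          rw [hδdef]; exact min_eq_right hcase.le
        have hneg : ρ / γ + δ < 0 := by
          rw [hδ2']
          have hnd : -ρ / γ = -(ρ / γ) := neg_div _ _
          linarith
        simpa using tendsto_rpow_neg_atTop (by linarith : 0 < -(ρ / γ + δ))
    have := hfac.mul hlim
    rw [one_mul] at this
    exact this.congr' hev.symm
  have hterm2 : Tendsto (fun u : ℝ => (1 + M / u ^ 2) ^ (-α) *
      ((G (M + u ^ 2) / (lam1 * (M + u ^ 2) ^ (-α)) - 1) * u ^ δ))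
      atTop (nhds (1 * (lam2 * L2))) := by
    refine hP.mul ?_
    have hev : (fun u : ℝ => (G (M + u ^ 2) / (lam1 * (M + u ^ 2) ^ (-α)) - 1) /
          (M + u ^ 2) ^ (ρ / (2 * γ)) * ((M + u ^ 2) ^ (ρ / (2 * γ)) * u ^ δ)) =ᶠ[atTop]
        (fun u : ℝ => (G (M + u ^ 2) / (lam1 * (M + u ^ 2) ^ (-α)) - 1) * u ^ δ) := by
      refine Eventually.of_forall fun u => ?_
      have h0 : (0:ℝ) < M + u ^ 2 := by positivity
      have hne : (M + u ^ 2) ^ (ρ / (2 * γ)) ≠ 0 := (Real.rpow_pos_of_pos h0 _).ne'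
      field_simp
    exact (hE.mul hpow2).congr' hev
  set a : ℝ := -α * L1 + 1 * (lam2 * L2) with hadef
  have hA : Tendsto (fun u : ℝ => (G (M + u ^ 2) / (lam1 * u ^ (-(2 * α))) - 1) * u ^ δ)
      atTop (nhds a) := by
    refine (hterm1.add hterm2).congr' ?_
    filter_upwards [eventually_gt_atTop (0:ℝ)] with u hu
    have h0 : (0:ℝ) < M + u ^ 2 := by positivity
    have hu2 : (0:ℝ) < u ^ 2 := by positivity
    have h1' : (0:ℝ) < 1 + M / u ^ 2 := by positivity
    have hrel : (M + u ^ 2) ^ (-α) = u ^ (-(2 * α)) * (1 + M / u ^ 2) ^ (-α) := by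
      have h1 : M + u ^ 2 = u ^ 2 * (1 + M / u ^ 2) := by field_simp; ring
      rw [h1, Real.mul_rpow hu2.le h1'.le, ← Real.rpow_natCast u 2, ← Real.rpow_mul hu.le]
      norm_num
    have hne1 : u ^ (-(2 * α)) ≠ 0 := (Real.rpow_pos_of_pos hu _).ne'
    have hne2 : (1 + M / u ^ 2) ^ (-α) ≠ 0 := (Real.rpow_pos_of_pos h1' _).ne'
    rw [hrel]
    field_simp
    ring
  have hD : Tendsto (fun u : ℝ => G (M + u ^ 2) / (lam1 * u ^ (-(2 * α))) - 1)
      atTop (nhds 0) := by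
    have h2 := hA.mul (tendsto_rpow_neg_atTop hδ0)
    rw [mul_zero] at h2
    refine h2.congr' ?_
    filter_upwards [eventually_gt_atTop (0:ℝ)] with u hu
    rw [mul_assoc, ← Real.rpow_add hu]
    simp
  have hA0 : Tendsto (fun u : ℝ => G (M + u ^ 2) * u ^ (2 * α)) atTop (nhds lam1) := by
    have h2 := (hD.add (tendsto_const_nhds : Tendsto (fun _ : ℝ => (1:ℝ)) atTop (nhds 1))).mul_const lam1
    rw [zero_add, one_mul] at h2
    refine h2.congr' ?_
    filter_upwards [eventually_gt_atTop (0:ℝ)] with u hu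
    have h3 : (0:ℝ) < u ^ (2*α) := Real.rpow_pos_of_pos hu _
    rw [sub_add_cancel, Real.rpow_neg hu.le]
    field_simp
  have hm0 : Measurable fun u : ℝ => G (M + u ^ 2) := hmG.comp (by fun_prop)
  obtain ⟨hInt0, hT0⟩ := tail_tendsto hm0 hα1 hA0
  have hm1 : Measurable fun u : ℝ => G (M + u ^ 2) - lam1 * u ^ (-(2 * α)) :=
    hm0.sub (by fun_prop)
  have hα1' : 1 < 2 * α + δ := by linarith
  have hA1 : Tendsto (fun u : ℝ => (G (M + u ^ 2) - lam1 * u ^ (-(2 * α))) * u ^ (2 * α + δ))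
      atTop (nhds (lam1 * a)) := by
    have h2 := hA.const_mul lam1
    refine h2.congr' ?_
    filter_upwards [eventually_gt_atTop (0:ℝ)] with u hu
    have h3 : (0:ℝ) < u ^ (2*α) := Real.rpow_pos_of_pos hu _
    have hsplit : u ^ (2*α+δ) = u ^ (2*α) * u ^ δ := by rw [← Real.rpow_add hu]
    rw [hsplit, Real.rpow_neg hu.le]
    field_simp
  obtain ⟨hInt1, hT1⟩ := tail_tendsto hm1 hα1' hA1
  have hS : ∀ᶠ x : ℝ in atTop, (∫ u in Set.Ioi x, (G (M + u ^ 2) - lam1 * u ^ (-(2 * α))))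
      = (∫ u in Set.Ioi x, G (M + u ^ 2)) - lam1 * (x ^ (1 - 2 * α) / (2 * α - 1)) := by
    filter_upwards [hInt0, eventually_gt_atTop (0:ℝ)] with x hint hx0
    have hpow : IntegrableOn (fun u : ℝ => u ^ (-(2*α))) (Set.Ioi x) :=
      integrableOn_Ioi_rpow_of_lt (by linarith) hx0
    rw [MeasureTheory.integral_sub hint (hpow.const_mul lam1), MeasureTheory.integral_const_mul,
      integral_Ioi_rpow_of_lt (by linarith) hx0, show -(2*α) + 1 = 1 - 2*α by ring,
      neg_div, ← div_neg, neg_sub]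
  have htpos : ∀ᶠ t : ℝ in atTop, 0 < t := eventually_gt_atTop 0
  have hQpos : ∀ᶠ t : ℝ in atTop, 0 < Q t := hQtop.eventually_gt_atTop 0
  have hTQ : ∀ᶠ t : ℝ in atTop, (∫ u in Set.Ioi (Q t), G (M + u ^ 2)) = C / t := by
    filter_upwards [hQ, htpos] with t ht htp
    rw [div_eq_iff hC.ne'] at ht
    rw [ht]; ring
  set K : ℝ := lam1 / (2 * α - 1) / C with hKdef
  have hβpos : (0:ℝ) < 2 * α - 1 := by linarith
  have hK : 0 < K := by rw [hKdef]; positivity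
  set R : ℝ → ℝ := fun t => Q t ^ (2 * α - 1) / t with hRdef
  have hR : Tendsto R atTop (nhds K) := by
    have h1 := (hT0.comp hQtop).div_const C
    refine h1.congr' ?_
    filter_upwards [hTQ, htpos, hQpos] with t hTQt ht hQt
    simp only [Function.comp]
    rw [hTQt, hRdef]
    field_simp
  have h2 : Tendsto (fun t => (R t - K) * Q t ^ δ) atTop
      (nhds (lam1 * a / (2 * α + δ - 1) / C)) := by
    have h1 := (hT1.comp hQtop).div_const C
    refine h1.congr' ?_
    filter_upwards [hTQ, htpos, hQpos, hQtop.eventually hS] with t hTQt ht hQt hSt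
    simp only [Function.comp]
    rw [hSt, hTQt, hRdef, hKdef]
    have hQβ : (0:ℝ) < Q t ^ (2*α-1) := Real.rpow_pos_of_pos hQt _
    have e1 : Q t ^ (2*α+δ-1) = Q t ^ (2*α-1) * Q t ^ δ := by
      rw [← Real.rpow_add hQt]; ring_nf
    have e3 : Q t ^ (1-2*α) = (Q t ^ (2*α-1))⁻¹ := by
      rw [show 1-2*α = -(2*α-1) by ring, Real.rpow_neg hQt.le]
    rw [e1, e3]
    field_simp
  have hW : Tendsto (fun t => R t ^ (δ / (2 * α - 1))) atTop
      (nhds (K ^ (δ / (2 * α - 1)))) := hR.rpow_const (Or.inl hK.ne')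
  have hKp : 0 < K ^ (δ / (2 * α - 1)) := Real.rpow_pos_of_pos hK _
  have h3 : Tendsto (fun t => (R t - K) * t ^ (δ / (2 * α - 1))) atTop
      (nhds (lam1 * a / (2 * α + δ - 1) / C / K ^ (δ / (2 * α - 1)))) := by
    have h4 := h2.div hW hKp.ne'
    refine h4.congr' ?_
    filter_upwards [htpos, hQpos] with t ht hQt
    have hQβ : (0:ℝ) < Q t ^ (2*α-1) := Real.rpow_pos_of_pos hQt _
    have hRt : 0 < R t := by rw [hRdef]; positivity
    have hRp : (0:ℝ) < R t ^ (δ/(2*α-1)) := Real.rpow_pos_of_pos hRt _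
    have hQδ : Q t ^ δ = R t ^ (δ/(2*α-1)) * t ^ (δ/(2*α-1)) := by
      have e1 : Q t ^ (2*α-1) = R t * t := by rw [hRdef]; field_simp
      have e2 : Q t ^ δ = (Q t ^ (2*α-1)) ^ (δ/(2*α-1)) := by
        rw [← Real.rpow_mul hQt.le]
        congr 1
        field_simp
      rw [e2, e1, Real.mul_rpow hRt.le ht.le]
    simp only [Pi.div_apply]
    rw [hQδ]
    field_simp
  have h4 : Tendsto (fun t => R t / K) atTop (nhds 1) := by
    have := hR.div_const K
    rwa [div_self hK.ne'] at this
  have h4' : Tendsto (fun t => (R t / K - 1) * t ^ (δ / (2 * α - 1))) atTop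
      (nhds (lam1 * a / (2 * α + δ - 1) / C / K ^ (δ / (2 * α - 1)) / K)) := by
    have h6 := h3.div_const K
    refine h6.congr fun t => ?_
    rw [mul_div_right_comm, sub_div, div_self hK.ne']
  have h5 := tendsto_rpow_one_mul (1/(2*α-1)) h4 h4'
  set c₁ : ℝ := K ^ (1/(2*α-1)) with hc₁def
  have hc₁ : 0 < c₁ := Real.rpow_pos_of_pos hK _
  refine ⟨c₁, hc₁,
    1 / (2 * α - 1) * (lam1 * a / (2 * α + δ - 1) / C / K ^ (δ / (2 * α - 1)) / K), ?_⟩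
  have hαβ : 2 * α - 1 = (N:ℝ) + 1/γ := by rw [hαdef]; ring
  have hγN : (0:ℝ) < γ * N + 1 := by positivity
  have hNγ : (0:ℝ) < (N:ℝ) + 1/γ := by positivity
  have he1 : γ / (γ * (N:ℝ) + 1) = 1/(2*α-1) := by
    rw [hαβ, div_eq_div_iff (by positivity) (by positivity)]
    field_simp
  have he2 : min (-ρ) (2*γ) / (γ * (N:ℝ) + 1) = δ/(2*α-1) := by
    have hmin : min (-ρ) (2*γ) = δ * γ := by
      rw [hδdef]
      rcases le_total (-ρ) (2*γ) with hle | hle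
      · rw [min_eq_left hle, min_eq_left (by rw [div_le_iff₀ hγ]; linarith)]
        field_simp
      · rw [min_eq_right hle, min_eq_right (by rw [le_div_iff₀ hγ]; linarith)]
    rw [hmin, hαβ]
    rw [div_eq_div_iff hγN.ne' hNγ.ne']
    field_simp
  rw [he1, he2]
  refine h5.congr' ?_
  filter_upwards [htpos, hQpos] with t ht hQt
  have hQβ : (0:ℝ) < Q t ^ (2*α-1) := Real.rpow_pos_of_pos hQt _
  have key : (R t / K) ^ (1/(2*α-1)) = Q t / (c₁ * t ^ (1/(2*α-1))) := by
    have e1 : R t / K = Q t ^ (2*α-1) / (K * t) := by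
      simp only [hRdef]
      rw [div_div, mul_comm t K]
    have e2 : (Q t ^ (2*α-1)) ^ (1/(2*α-1)) = Q t := by
      rw [← Real.rpow_mul hQt.le, mul_one_div_cancel hβpos.ne', Real.rpow_one]
    rw [e1, Real.div_rpow hQβ.le (by positivity), e2, Real.mul_rpow hK.le ht.le, hc₁def]
  rw [key]
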